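/- Let x > 0 and 0 < β < 1 be reals, and write ψ(a) = a coth(a) - 1 and φ(a) = sinh(a) - a. Then ψ(x√β) ψ(x) < (β/(4(1-β))) · ((ψ(x) - ψ(x√β))/x) · φ(2x). -/

import Mathlib

noncomputable def coth (x : ℝ) : ℝ := Real.cosh x / Real.sinh x

noncomputable def ψ (a : ℝ) : ℝ := a * coth a - 1

noncomputable def φ (a : ℝ) : ℝ := Real.sinh a - a

/-- quintic Taylor lower bound for exp -/
lemma exp_quintic {z : ℝ} (hz : 0 ≤ z) :
    1 + z + z^2/2 + z^3/6 + z^4/24 + z^5/120 ≤ Real.exp z := by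
  have h := Real.sum_le_exp_of_nonneg hz 6
  simp only [Finset.sum_range_succ, Finset.sum_range_zero] at h
  norm_num [Nat.factorial] at h
  linarith

set_option maxHeartbeats 1000000 in
lemma keyG {b : ℝ} (hb : 0 < b) :
    0 ≤ (Real.exp b - 1)^2*(Real.exp b + 1) + 2*b*Real.exp b*(Real.exp b - 1)
        - 2*b^2*Real.exp b*(Real.exp b + 1) := by
  have hb0 : (0:ℝ) ≤ b := hb.le
  have hP := exp_quintic hb0
  set t : ℝ := Real.exp b - (1 + b + b^2/2 + b^3/6 + b^4/24 + b^5/120) with htdef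
  have ht : 0 ≤ t := by rw [htdef]; linarith
  have hU : Real.exp b = t + (1 + b + b^2/2 + b^3/6 + b^4/24 + b^5/120) := by
    rw [htdef]; ring
  have hT0 : (0:ℝ) ≤ (1/45:ℝ)*b^6 + (1/40:ℝ)*b^7 + (1/48:ℝ)*b^8 + (97/8640:ℝ)*b^9 + (139/28800:ℝ)*b^10 + (1/640:ℝ)*b^11 + (133/345600:ℝ)*b^12 + (1/12800:ℝ)*b^13 + (1/115200:ℝ)*b^14 + (1/1728000:ℝ)*b^15 := by
    have h6 := pow_nonneg hb0 6
    have h7 := pow_nonneg hb0 7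
    have h8 := pow_nonneg hb0 8
    have h9 := pow_nonneg hb0 9
    have h10 := pow_nonneg hb0 10
    have h11 := pow_nonneg hb0 11
    have h12 := pow_nonneg hb0 12
    have h13 := pow_nonneg hb0 13
    have h14 := pow_nonneg hb0 14
    have h15 := pow_nonneg hb0 15
    linarith
  have hT1 : (0:ℝ) ≤ (6:ℝ)*b + (3:ℝ)*b^2 + (5/3:ℝ)*b^3 + (7/12:ℝ)*b^4 + (17/60:ℝ)*b^5 + (1/8:ℝ)*b^6 + (1/30:ℝ)*b^7 + (13/960:ℝ)*b^8 + (1/480:ℝ)*b^9 + (1/4800:ℝ)*b^10 := by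
    have h1 := pow_nonneg hb0 1
    have h2 := pow_nonneg hb0 2
    have h3 := pow_nonneg hb0 3
    have h4 := pow_nonneg hb0 4
    have h5 := pow_nonneg hb0 5
    have h6 := pow_nonneg hb0 6
    have h7 := pow_nonneg hb0 7
    have h8 := pow_nonneg hb0 8
    have h9 := pow_nonneg hb0 9
    have h10 := pow_nonneg hb0 10
    have hb1 : b^1 = b := pow_one b
    linarith
  have hT2 : (0:ℝ) ≤ (2:ℝ) + (5:ℝ)*b + (-1/2:ℝ)*b^2 + (1/2:ℝ)*b^3 + (1/8:ℝ)*b^4 + (1/40:ℝ)*b^5 := by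
    nlinarith [mul_nonneg hb0 (sq_nonneg (b-1)), pow_nonneg hb0 4, pow_nonneg hb0 5, hb0]
  rw [hU]
  have hA := mul_nonneg hT1 ht
  have hB := mul_nonneg hT2 (pow_nonneg ht 2)
  have hC := pow_nonneg ht 3
  ring_nf
  ring_nf at hA hB hC hT0
  linarith [hA, hB, hC, hT0]

set_option maxHeartbeats 1000000 in
lemma keyH {x : ℝ} (hx : 0 < x) :
    16*x^2*Real.exp (2*x)*(Real.exp (2*x) - 1)*((x-1)*Real.exp (2*x) + x + 1)
      ≤ 3*(Real.exp (2*x)^2 - 4*x*Real.exp (2*x) - 1)^2 := by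
  have hx0 : (0:ℝ) ≤ x := hx.le
  have hP0 := exp_quintic (show (0:ℝ) ≤ 2*x by linarith)
  have hP : 1 + 2*x + 2*x^2 + (4/3:ℝ)*x^3 + (2/3:ℝ)*x^4 + (4/15:ℝ)*x^5 ≤ Real.exp (2*x) := by
    linarith [hP0]
  set t : ℝ := Real.exp (2*x) - (1 + 2*x + 2*x^2 + (4/3:ℝ)*x^3 + (2/3:ℝ)*x^4 + (4/15:ℝ)*x^5) with htdef
  have ht : 0 ≤ t := by rw [htdef]; linarith
  have hU : Real.exp (2*x) = t + (1 + 2*x + 2*x^2 + (4/3:ℝ)*x^3 + (2/3:ℝ)*x^4 + (4/15:ℝ)*x^5) := by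
    rw [htdef]; ring
  have hS0 : (0:ℝ) ≤ (128/45:ℝ)*x^8 + (256/45:ℝ)*x^9 + (2432/225:ℝ)*x^10 + (2048/135:ℝ)*x^11 + (3904/225:ℝ)*x^12 + (10688/675:ℝ)*x^13 + (8128/675:ℝ)*x^14 + (8576/1125:ℝ)*x^15 + (2704/675:ℝ)*x^16 + (128/75:ℝ)*x^17 + (128/225:ℝ)*x^18 + (512/3375:ℝ)*x^19 + (256/16875:ℝ)*x^20 := by
    have h8 := pow_nonneg hx0 8
    have h9 := pow_nonneg hx0 9
    have h10 := pow_nonneg hx0 10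
    have h11 := pow_nonneg hx0 11
    have h12 := pow_nonneg hx0 12
    have h13 := pow_nonneg hx0 13
    have h14 := pow_nonneg hx0 14
    have h15 := pow_nonneg hx0 15
    have h16 := pow_nonneg hx0 16
    have h17 := pow_nonneg hx0 17
    have h18 := pow_nonneg hx0 18
    have h19 := pow_nonneg hx0 19
    have h20 := pow_nonneg hx0 20
    linarith
  have hS1 : (0:ℝ) ≤ (64:ℝ)*x^3 + (128:ℝ)*x^4 + (2656/15:ℝ)*x^5 + (544/3:ℝ)*x^6 + (2432/15:ℝ)*x^7 + (1808/15:ℝ)*x^8 + (3584/45:ℝ)*x^9 + (1184/25:ℝ)*x^10 + (128/5:ℝ)*x^11 + (544/45:ℝ)*x^12 + (64/15:ℝ)*x^13 + (128/75:ℝ)*x^14 + (256/1125:ℝ)*x^15 := by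
    have h3 := pow_nonneg hx0 3
    have h4 := pow_nonneg hx0 4
    have h5 := pow_nonneg hx0 5
    have h6 := pow_nonneg hx0 6
    have h7 := pow_nonneg hx0 7
    have h8 := pow_nonneg hx0 8
    have h9 := pow_nonneg hx0 9
    have h10 := pow_nonneg hx0 10
    have h11 := pow_nonneg hx0 11
    have h12 := pow_nonneg hx0 12
    have h13 := pow_nonneg hx0 13
    have h14 := pow_nonneg hx0 14
    have h15 := pow_nonneg hx0 15
    linarith
  have hS2 : (0:ℝ) ≤ (12:ℝ) + (64:ℝ)*x^2 + (96:ℝ)*x^3 + (96:ℝ)*x^4 + (368/5:ℝ)*x^5 + (48:ℝ)*x^6 + (32:ℝ)*x^7 + (8:ℝ)*x^8 + (32/5:ℝ)*x^9 + (32/25:ℝ)*x^10 := by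
    have h2 := pow_nonneg hx0 2
    have h3 := pow_nonneg hx0 3
    have h4 := pow_nonneg hx0 4
    have h5 := pow_nonneg hx0 5
    have h6 := pow_nonneg hx0 6
    have h7 := pow_nonneg hx0 7
    have h8 := pow_nonneg hx0 8
    have h9 := pow_nonneg hx0 9
    have h10 := pow_nonneg hx0 10
    linarith
  have hS3 : (0:ℝ) ≤ (12:ℝ) + (40:ℝ)*x^2 + (8:ℝ)*x^4 + (16/5:ℝ)*x^5 := by
    have h2 := pow_nonneg hx0 2
    have h4 := pow_nonneg hx0 4
    have h5 := pow_nonneg hx0 5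
    linarith
  rw [hU]
  have hA := mul_nonneg hS1 ht
  have hB := mul_nonneg hS2 (pow_nonneg ht 2)
  have hC := mul_nonneg hS3 (pow_nonneg ht 3)
  have hD := pow_nonneg ht 4
  ring_nf
  ring_nf at hA hB hC hD hS0
  linarith [hA, hB, hC, hD, hS0]

lemma keyA_num {a : ℝ} (ha : 0 < a) :
    2*a^2*Real.cosh a ≤ Real.sinh a^2*Real.cosh a + a*Real.sinh a := by
  have hG := keyG (b := 2*a) (by linarith)
  have hE : Real.exp (2*a) = Real.exp a^2 := by rw [two_mul, Real.exp_add]; ring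
  rw [hE] at hG
  have hu : 0 < Real.exp a := Real.exp_pos a
  rw [← sub_nonneg]
  have h8 : Real.sinh a^2*Real.cosh a + a*Real.sinh a - 2*a^2*Real.cosh a
      = ((Real.exp a^2 - 1)^2*(Real.exp a^2 + 1) + 2*(2*a)*Real.exp a^2*(Real.exp a^2 - 1)
        - 2*(2*a)^2*Real.exp a^2*(Real.exp a^2 + 1)) / (8*Real.exp a^3) := by
    rw [Real.sinh_eq, Real.cosh_eq, Real.exp_neg]
    field_simp
    ring
  rw [h8]
  exact div_nonneg hG (by positivity)

lemma keyB_num {x : ℝ} (hx : 0 < x) :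
    8*x^2*Real.sinh x*(x*Real.cosh x - Real.sinh x) ≤ 6*(Real.sinh x*Real.cosh x - x)^2 := by
  have hH := keyH hx
  have hE : Real.exp (2*x) = Real.exp x^2 := by rw [two_mul, Real.exp_add]; ring
  rw [hE] at hH
  have hu : 0 < Real.exp x := Real.exp_pos x
  rw [← sub_nonneg]
  have h8 : 6*(Real.sinh x*Real.cosh x - x)^2 - 8*x^2*Real.sinh x*(x*Real.cosh x - Real.sinh x)
      = (3*((Real.exp x^2)^2 - 4*x*Real.exp x^2 - 1)^2
        - 16*x^2*Real.exp x^2*(Real.exp x^2 - 1)*((x-1)*Real.exp x^2 + x + 1)) / (8*Real.exp x^4) := by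
    rw [Real.sinh_eq, Real.cosh_eq, Real.exp_neg]
    field_simp
    ring
  rw [h8]
  exact div_nonneg (by linarith) (by positivity)

lemma L3num {y : ℝ} (hy : 0 < y) : 3*(y*Real.cosh y - Real.sinh y) < y^2*Real.sinh y := by
  have hP0 := exp_quintic (show (0:ℝ) ≤ 2*y by linarith)
  have hP : 1 + 2*y + 2*y^2 + (4/3:ℝ)*y^3 + (2/3:ℝ)*y^4 + (4/15:ℝ)*y^5 ≤ Real.exp (2*y) := by
    linarith [hP0]
  have hE : Real.exp (2*y) = Real.exp y^2 := by rw [two_mul, Real.exp_add]; ring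
  rw [hE] at hP
  have hu : 0 < Real.exp y := Real.exp_pos y
  rw [← sub_pos]
  have h8 : y^2*Real.sinh y - 3*(y*Real.cosh y - Real.sinh y)
      = (Real.exp y^2*(y^2 - 3*y + 3) - (y^2 + 3*y + 3)) / (2*Real.exp y) := by
    rw [Real.sinh_eq, Real.cosh_eq, Real.exp_neg]
    field_simp
    ring
  rw [h8]
  apply div_pos _ (by positivity)
  have h3 : (0:ℝ) < y^2 - 3*y + 3 := by nlinarith [sq_nonneg (y - 3/2)]
  have hm := mul_le_mul_of_nonneg_right hP h3.le
  have h5 : (0:ℝ) < y^5 := pow_pos hy 5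
  nlinarith [hm, mul_pos h5 (show (0:ℝ) < 2*y^2 - y + 1 by nlinarith [sq_nonneg (2*y-1)])]

lemma sinh_lt_mul_cosh {x : ℝ} (hx : 0 < x) : Real.sinh x < x*Real.cosh x := by
  have H : ∀ t : ℝ, HasDerivAt (fun t => t*Real.cosh t - Real.sinh t) (t*Real.sinh t) t := by
    intro t
    have h1 := ((hasDerivAt_id t).mul (Real.hasDerivAt_cosh t)).sub (Real.hasDerivAt_sinh t)
    refine h1.congr_deriv ?_
    simp [id]
  have mono : StrictMonoOn (fun t : ℝ => t*Real.cosh t - Real.sinh t) (Set.Ici 0) := by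
    apply strictMonoOn_of_deriv_pos (convex_Ici 0)
    · exact fun t _ => (H t).continuousAt.continuousWithinAt
    · intro t ht
      rw [interior_Ici] at ht
      rw [(H t).deriv]
      exact mul_pos ht (Real.sinh_pos_iff.mpr ht)
  have h := mono Set.self_mem_Ici (show x ∈ Set.Ici (0:ℝ) from hx.le) hx
  simp only [Real.cosh_zero, Real.sinh_zero, mul_one, zero_mul, sub_zero, mul_zero] at h
  linarith [h]

noncomputable def kfun (t : ℝ) : ℝ := (Real.sinh t * Real.cosh t - t) / (t * Real.sinh t ^ 2)

lemma hasDerivAt_psi {t : ℝ} (ht : 0 < t) :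
    HasDerivAt ψ ((Real.sinh t*Real.cosh t - t)/Real.sinh t^2) t := by
  have hs : Real.sinh t ≠ 0 := (Real.sinh_pos_iff.mpr ht).ne'
  have h1 : HasDerivAt (fun a => Real.cosh a / Real.sinh a)
      ((Real.sinh t*Real.sinh t - Real.cosh t*Real.cosh t)/Real.sinh t^2) t :=
    (Real.hasDerivAt_cosh t).div (Real.hasDerivAt_sinh t) hs
  have h2 := ((hasDerivAt_id t).mul h1).sub_const 1
  have h3 : HasDerivAt ψ
      (1*(Real.cosh t/Real.sinh t) + t*((Real.sinh t*Real.sinh t - Real.cosh t*Real.cosh t)/Real.sinh t^2)) t := by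
    have : ψ = fun a => a * (Real.cosh a / Real.sinh a) - 1 := by
      funext a; simp [ψ, coth]
    rw [this]
    simpa [id] using h2
  convert h3 using 1
  have hc := Real.cosh_sq t
  field_simp
  linear_combination t * hc

lemma hasDerivAt_kfun {t : ℝ} (ht : 0 < t) :
    HasDerivAt kfun (-(Real.sinh t*(Real.sinh t^2*Real.cosh t + t*Real.sinh t - 2*t^2*Real.cosh t))
      /(t*Real.sinh t^2)^2) t := by
  have hsp : 0 < Real.sinh t := Real.sinh_pos_iff.mpr ht
  have hs : Real.sinh t ≠ 0 := hsp.ne'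
  have hN : HasDerivAt (fun a => Real.sinh a*Real.cosh a - a)
      (Real.cosh t*Real.cosh t + Real.sinh t*Real.sinh t - 1) t := by
    have h := ((Real.hasDerivAt_sinh t).mul (Real.hasDerivAt_cosh t)).sub (hasDerivAt_id t)
    exact h
  have hD : HasDerivAt (fun a => a*Real.sinh a^2)
      (Real.sinh t^2 + t*(2*Real.sinh t*Real.cosh t)) t := by
    have hsq : HasDerivAt (fun a => Real.sinh a^2) (2*Real.sinh t*Real.cosh t) t := by
      have h := (Real.hasDerivAt_sinh t).pow 2
      refine h.congr_deriv ?_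
      norm_num
    have h := (hasDerivAt_id t).mul hsq
    refine h.congr_deriv ?_
    simp [id]
  have hden : t*Real.sinh t^2 ≠ 0 := by positivity
  have h := hN.div hD hden
  have hkf : kfun = fun a => (Real.sinh a*Real.cosh a - a)/(a*Real.sinh a^2) := by
    funext a; simp [kfun]
  rw [hkf]
  refine h.congr_deriv ?_
  congr 1
  have hc := Real.cosh_sq t
  ring_nf
  linear_combination (-(t * Real.sinh t ^ 2)) * hc

lemma kfun_anti : AntitoneOn kfun (Set.Ioi (0:ℝ)) := by
  apply antitoneOn_of_deriv_nonpos (convex_Ioi 0)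
  · intro t ht
    exact (hasDerivAt_kfun ht).continuousAt.continuousWithinAt
  · intro t ht
    rw [interior_Ioi] at ht
    exact (hasDerivAt_kfun ht).differentiableAt.differentiableWithinAt
  · intro t ht
    rw [interior_Ioi] at ht
    rw [(hasDerivAt_kfun ht).deriv]
    apply div_nonpos_of_nonpos_of_nonneg _ (by positivity)
    have hsp : 0 < Real.sinh t := Real.sinh_pos_iff.mpr ht
    have hE := keyA_num ht
    have := mul_nonneg hsp.le (sub_nonneg.mpr hE)
    nlinarith [this]

lemma factA' {x y : ℝ} (hy : 0 < y) (hyx : y < x) :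
    (x^2-y^2)*(Real.sinh x*Real.cosh x - x)*Real.sinh y
      ≤ 2*x*Real.sinh x*(x*Real.cosh x*Real.sinh y - y*Real.cosh y*Real.sinh x) := by
  have hx : 0 < x := hy.trans hyx
  have hsx : 0 < Real.sinh x := Real.sinh_pos_iff.mpr hx
  have hsy : 0 < Real.sinh y := Real.sinh_pos_iff.mpr hy
  set d : ℝ := (Real.sinh x*Real.cosh x - x)/Real.sinh x^2 with hd
  set F : ℝ → ℝ := fun t => (ψ x - ψ t)*(2*x) - (x^2 - t^2)*d with hF
  have hder : ∀ t : ℝ, 0 < t →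
      HasDerivAt F (-((Real.sinh t*Real.cosh t - t)/Real.sinh t^2)*(2*x) + 2*t*d) t := by
    intro t ht
    have h1 := ((hasDerivAt_psi ht).const_sub (ψ x)).mul_const (2*x)
    have h2 : HasDerivAt (fun u : ℝ => (x^2 - u^2)*d) (-(2*t)*d) t := by
      have h3 : HasDerivAt (fun u : ℝ => u^2) (2*t) t := by
        have := hasDerivAt_pow 2 t
        simpa using this
      have := (h3.const_sub (x^2)).mul_const d
      convert this using 1
    have h := h1.sub h2
    rw [hF]
    refine h.congr_deriv ?_
    ring
  have hanti : AntitoneOn F (Set.Icc y x) := by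
    apply antitoneOn_of_deriv_nonpos (convex_Icc y x)
    · intro t ht
      exact (hder t (lt_of_lt_of_le hy ht.1)).continuousAt.continuousWithinAt
    · intro t ht
      rw [interior_Icc] at ht
      exact (hder t (hy.trans ht.1)).differentiableAt.differentiableWithinAt
    · intro t ht
      rw [interior_Icc] at ht
      have ht0 : 0 < t := hy.trans ht.1
      have hst : 0 < Real.sinh t := Real.sinh_pos_iff.mpr ht0
      rw [(hder t ht0).deriv]
      have hk : kfun x ≤ kfun t :=
        kfun_anti (Set.mem_Ioi.mpr ht0) (Set.mem_Ioi.mpr hx) ht.2.le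
      have e1 : (Real.sinh t*Real.cosh t - t)/Real.sinh t^2 = t * kfun t := by
        rw [kfun]; field_simp
      have e2 : d = x * kfun x := by
        rw [hd, kfun]; field_simp
      rw [e1, e2]
      have hmul := mul_le_mul_of_nonneg_left hk (mul_pos ht0 hx).le
      nlinarith [hmul]
  have hFy := hanti (Set.mem_Icc.mpr ⟨le_refl y, hyx.le⟩) (Set.mem_Icc.mpr ⟨hyx.le, le_refl x⟩) hyx.le
  have hFx : F x = 0 := by
    rw [hF]; ring
  rw [hFx] at hFy
  have hψx : ψ x = (x*Real.cosh x - Real.sinh x)/Real.sinh x := by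
    simp [ψ, coth]; field_simp
  have hψy : ψ y = (y*Real.cosh y - Real.sinh y)/Real.sinh y := by
    simp [ψ, coth]; field_simp
  rw [← sub_nonneg]
  have hq : 2*x*Real.sinh x*(x*Real.cosh x*Real.sinh y - y*Real.cosh y*Real.sinh x)
      - (x^2-y^2)*(Real.sinh x*Real.cosh x - x)*Real.sinh y
      = F y * (Real.sinh x^2 * Real.sinh y) := by
    rw [hF]
    simp only []
    rw [hψx, hψy, hd]
    field_simp
    ring
  rw [hq]
  exact mul_nonneg hFy (by positivity)

theorem stmt_11 (x β : ℝ) (hx : 0 < x) (hβ0 : 0 < β) (hβ1 : β < 1) :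
    ψ (x * Real.sqrt β) * ψ x <
      (β / (4 * (1 - β))) * ((ψ x - ψ (x * Real.sqrt β)) / x) * φ (2 * x) := by
  have hsb : 0 < Real.sqrt β := Real.sqrt_pos.mpr hβ0
  have hsb1 : Real.sqrt β < 1 := by
    have h := Real.sqrt_lt_sqrt hβ0.le hβ1
    rwa [Real.sqrt_one] at h
  set y := x * Real.sqrt β with hydef
  have hy : 0 < y := mul_pos hx hsb
  have hyx : y < x := by
    calc y = x * Real.sqrt β := rfl
    _ < x * 1 := by exact mul_lt_mul_of_pos_left hsb1 hx
    _ = x := mul_one x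
  have hy2 : y^2 = β*x^2 := by
    rw [hydef, mul_pow, Real.sq_sqrt hβ0.le]; ring
  have h6 : 0 < x^2 - y^2 := by nlinarith
  have hβ1' : (0:ℝ) < 1 - β := by linarith
  have hcoef : β/(4*(1-β)) = y^2/(4*(x^2-y^2)) := by
    rw [hy2]
    rw [div_eq_div_iff (by positivity) (by nlinarith)]
    ring
  have hsx : 0 < Real.sinh x := Real.sinh_pos_iff.mpr hx
  have hsy : 0 < Real.sinh y := Real.sinh_pos_iff.mpr hy
  have hE1 := L3num hy
  have hE2 : 0 < x*Real.cosh x - Real.sinh x := sub_pos.mpr (sinh_lt_mul_cosh hx)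
  have hE4 := keyB_num hx
  have hE5 := factA' hy hyx
  have hscx : 0 < Real.sinh x*Real.cosh x - x := by
    have h1 := Real.self_lt_sinh_iff.mpr hx
    nlinarith [Real.one_le_cosh x, hsx]
  -- the three product steps
  have hc1 : 0 < 8*x^2*Real.sinh x*(x*Real.cosh x - Real.sinh x)*(x^2-y^2) := by
    have : 0 < 8*x^2*Real.sinh x := by positivity
    exact mul_pos (mul_pos this hE2) h6
  have hP1 := mul_lt_mul_of_pos_left hE1 hc1
  have hP2 := mul_le_mul_of_nonneg_left hE4
    (show (0:ℝ) ≤ y^2*((x^2-y^2)*Real.sinh y) by positivity)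
  have hP3 := mul_le_mul_of_nonneg_left hE5
    (show (0:ℝ) ≤ 6*y^2*(Real.sinh x*Real.cosh x - x) by positivity)
  have hN' : 0 < 6*x*Real.sinh x*(y^2*(2*Real.sinh x*Real.cosh x - 2*x)
        *(x*Real.cosh x*Real.sinh y - y*Real.cosh y*Real.sinh x))
      - 24*x^2*Real.sinh x*((x^2-y^2)*(y*Real.cosh y - Real.sinh y)*(x*Real.cosh x - Real.sinh x)) := by
    nlinarith [hP1, hP2, hP3]
  have hD' : 0 < 24*x^2*Real.sinh x^2*(x^2-y^2)*Real.sinh y :=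
    mul_pos (mul_pos (by positivity) h6) hsy
  have hψx : ψ x = (x*Real.cosh x - Real.sinh x)/Real.sinh x := by
    simp [ψ, coth]; field_simp
  have hψy : ψ y = (y*Real.cosh y - Real.sinh y)/Real.sinh y := by
    simp [ψ, coth]; field_simp
  have hφ : φ (2*x) = 2*Real.sinh x*Real.cosh x - 2*x := by
    simp [φ, Real.sinh_two_mul]
  rw [hcoef, hψx, hψy, hφ, ← sub_pos]
  have heq : y ^ 2 / (4 * (x ^ 2 - y ^ 2)) *
        (((x * Real.cosh x - Real.sinh x) / Real.sinh x - (y * Real.cosh y - Real.sinh y) / Real.sinh y) / x) *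
        (2 * Real.sinh x * Real.cosh x - 2 * x)
      - (y * Real.cosh y - Real.sinh y) / Real.sinh y * ((x * Real.cosh x - Real.sinh x) / Real.sinh x)
      = (6*x*Real.sinh x*(y^2*(2*Real.sinh x*Real.cosh x - 2*x)
          *(x*Real.cosh x*Real.sinh y - y*Real.cosh y*Real.sinh x))
        - 24*x^2*Real.sinh x*((x^2-y^2)*(y*Real.cosh y - Real.sinh y)*(x*Real.cosh x - Real.sinh x)))
        / (24*x^2*Real.sinh x^2*(x^2-y^2)*Real.sinh y) := by
    field_simp
    ring
  rw [heq]
  exact div_pos hN' hD'
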